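/- arXiv:2308.09797 — 2 statements merged into one kernel-verified Lean document; each statement's English description precedes it below -/
import Mathlib

section
/- For the diversifying choice function, C(z ∨ z') is the join of rational vectors z and z' with respect to revealed preference: if z, z' : S → ℝ≥0 are rational, then C(z ∨ z') is rational, C(z ∨ z') ⪰ z and C(z ∨ z') ⪰ z', and every rational w with w ⪰ z and w ⪰ z' satisfies w ⪰ C(z ∨ z'). -/
open scoped NNReal

/-- `IsDivChoice q z w` asserts that `w = C(z)`, where `C` is the diversifying choice
function with quota `q` on coordinates indexed by the finite set `S`:
if `|z| = ∑ e, z e ≤ q` then `C(z) = z`, and otherwise `C(z) e = min r (z e)` for all `e`,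
where `r ≥ 0` is the (unique) cutting height satisfying `∑ e, min r (z e) = q`. -/
def IsDivChoice {S : Type*} [Fintype S] (q : ℝ≥0) (z w : S → ℝ≥0) : Prop :=
  ((∑ e, z e) ≤ q ∧ w = z) ∨
    (q < ∑ e, z e ∧ ∃ r : ℝ≥0, (∑ e, min r (z e)) = q ∧ w = fun e => min r (z e))

section Aux

variable {S : Type*} [Fintype S] {q : ℝ≥0}

open Finset

lemma divChoice_sum_eq_of_le {f g : S → ℝ≥0} (hfg : ∀ e, f e ≤ g e)
    (h : ∑ e, g e ≤ ∑ e, f e) : g = f := by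
  have h1 : ∑ e, f e ≤ ∑ e, g e := Finset.sum_le_sum fun i _ => hfg i
  have h2 : ∑ e, f e = ∑ e, g e := le_antisymm h1 h
  funext e
  exact ((Finset.sum_eq_sum_iff_of_le (fun i _ => hfg i)).mp h2 e (mem_univ e)).symm

lemma divChoice_char {w x : S → ℝ≥0}
    (h : IsDivChoice q (fun e => max (w e) (x e)) w) :
    (∑ e, w e ≤ q) ∧
      ((∀ e, x e ≤ w e) ∨
        ((∑ e, w e = q) ∧ ∃ s, (∀ e, w e ≤ s) ∧ ∀ e, w e < x e → w e = s)) := by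
  rcases h with ⟨hs, hw⟩ | ⟨_, s, hsum, hw⟩
  · have hx : ∀ e, x e ≤ w e := by
      intro e
      by_contra hcc
      push_neg at hcc
      have heq : w e = max (w e) (x e) := congrFun hw e
      rw [max_eq_right hcc.le] at heq
      exact absurd heq (ne_of_lt hcc)
    refine ⟨?_, Or.inl hx⟩
    calc ∑ e, w e ≤ ∑ e, max (w e) (x e) := sum_le_sum fun i _ => le_max_left _ _
      _ ≤ q := hs
  · have hwe : ∀ e, w e = min s (max (w e) (x e)) := fun e => congrFun hw e
    have hq : ∑ e, w e = q := by
      rw [← hsum]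
      exact sum_congr rfl fun e _ => hwe e
    refine ⟨hq.le, Or.inr ⟨hq, s, fun e => (hwe e) ▸ min_le_left _ _, ?_⟩⟩
    intro e he
    have heq := hwe e
    rw [max_eq_right he.le] at heq
    rcases min_cases s (x e) with ⟨h1, _⟩ | ⟨h1, _⟩
    · rw [h1] at heq; exact heq
    · rw [h1] at heq; exact absurd heq (ne_of_lt he)

lemma divChoice_key_aux {w c : S → ℝ≥0} (hq : ∑ e, w e = q) (s : ℝ≥0)
    (hsle : ∀ e, w e ≤ s) (hs : ∀ e, w e < c e → w e = s) :
    IsDivChoice q (fun e => max (w e) (c e)) w := by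
  have hpt : ∀ e, w e = min s (max (w e) (c e)) := by
    intro e
    rcases le_or_gt (c e) (w e) with h | h
    · rw [max_eq_left h, min_eq_right (hsle e)]
    · rw [max_eq_right h.le, ← hs e h, min_eq_left h.le]
  by_cases hle : ∑ e, max (w e) (c e) ≤ q
  · left
    refine ⟨hle, (divChoice_sum_eq_of_le (fun e => le_max_left _ _) ?_).symm⟩
    rw [hq]
    exact hle
  · right
    push_neg at hle
    refine ⟨hle, s, ?_, funext hpt⟩
    rw [← hq]
    exact sum_congr rfl fun e _ => (hpt e).symm

lemma divChoice_key {w z z' c : S → ℝ≥0}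
    (hwz : IsDivChoice q (fun e => max (w e) (z e)) w)
    (hwz' : IsDivChoice q (fun e => max (w e) (z' e)) w)
    (hcb : ∀ e, w e < c e → w e < max (z e) (z' e)) :
    IsDivChoice q (fun e => max (w e) (c e)) w := by
  obtain ⟨hwq, hz⟩ := divChoice_char hwz
  obtain ⟨-, hz'⟩ := divChoice_char hwz'
  rcases hz with hz | ⟨hq, s, hsle, hs⟩
  · rcases hz' with hz' | ⟨hq, s, hsle, hs⟩
    · -- both `z ≤ w` and `z' ≤ w`
      have hcw : ∀ e, c e ≤ w e := by
        intro e
        by_contra hcc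
        push_neg at hcc
        exact absurd (hcb e hcc) (not_lt.mpr (max_le (hz e) (hz' e)))
      left
      exact ⟨by
        calc ∑ e, max (w e) (c e) = ∑ e, w e :=
              sum_congr rfl fun e _ => max_eq_left (hcw e)
          _ ≤ q := hwq,
        funext fun e => (max_eq_left (hcw e)).symm⟩
    · -- `z ≤ w`, height `s` for `z'`
      refine divChoice_key_aux hq s hsle ?_
      intro e he
      rcases lt_max_iff.mp (hcb e he) with h | h
      · exact absurd h (not_lt.mpr (hz e))
      · exact hs e h
  · rcases hz' with hz' | ⟨hq', s', hsle', hs'⟩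
    · -- height `s` for `z`, `z' ≤ w`
      refine divChoice_key_aux hq s hsle ?_
      intro e he
      rcases lt_max_iff.mp (hcb e he) with h | h
      · exact hs e h
      · exact absurd h (not_lt.mpr (hz' e))
    · -- heights `s` and `s'`
      refine divChoice_key_aux hq (min s s') (fun e => le_min (hsle e) (hsle' e)) ?_
      intro e he
      rcases lt_max_iff.mp (hcb e he) with h | h
      · have h1 := hs e h
        have h2 : s ≤ s' := h1 ▸ hsle' e
        rw [min_eq_left h2]
        exact h1
      · have h1 := hs' e h
        have h2 : s' ≤ s := h1 ▸ hsle e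
        rw [min_eq_right h2]
        exact h1

lemma divChoice_mid {m x c : S → ℝ≥0} {r : ℝ≥0} (hc : ∀ e, c e = min r (m e))
    (hr : ∑ e, min r (m e) = q) (hx : ∀ e, x e ≤ m e) :
    IsDivChoice q (fun e => max (c e) (x e)) c := by
  have hq : ∑ e, c e = q := by
    rw [← hr]
    exact Finset.sum_congr rfl fun e _ => hc e
  have hpt : ∀ e, c e = min r (max (c e) (x e)) := by
    intro e
    rcases le_or_gt (x e) (c e) with h | h
    · rw [max_eq_left h, hc e, min_eq_right (min_le_left _ _)]
    · have hcr : c e = r := by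
        rcases min_cases r (m e) with ⟨h1, _⟩ | ⟨h1, _⟩
        · rw [hc e, h1]
        · exfalso
          have : c e = m e := by rw [hc e, h1]
          exact absurd (lt_of_lt_of_le h (hx e)) (not_lt.mpr this.ge)
      rw [max_eq_right h.le, ← hcr, min_eq_left (hcr ▸ (hcr ▸ h.le : r ≤ x e))]
  by_cases hle : ∑ e, max (c e) (x e) ≤ q
  · left
    refine ⟨hle, (divChoice_sum_eq_of_le (fun e => le_max_left _ _) ?_).symm⟩
    rw [hq]
    exact hle
  · right
    push_neg at hle
    refine ⟨hle, r, ?_, funext hpt⟩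
    rw [← hq]
    exact Finset.sum_congr rfl fun e _ => (hpt e).symm

end Aux

/-- For rational `z, z'`, the vector `C(z ∨ z')` is the join of `z`
and `z'` with respect to revealed preference: it is rational, preferred to both `z` and
`z'`, and any rational `w` preferred to both `z` and `z'` is preferred to `C(z ∨ z')`. -/
theorem divChoice_join {S : Type*} [Fintype S] (q : ℝ≥0) (z z' c : S → ℝ≥0)
    (hz : IsDivChoice q z z) (hz' : IsDivChoice q z' z')
    (hc : IsDivChoice q (fun e => max (z e) (z' e)) c) :
    IsDivChoice q c c ∧
    IsDivChoice q (fun e => max (c e) (z e)) c ∧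
    IsDivChoice q (fun e => max (c e) (z' e)) c ∧
    ∀ w : S → ℝ≥0, IsDivChoice q w w →
      IsDivChoice q (fun e => max (w e) (z e)) w →
      IsDivChoice q (fun e => max (w e) (z' e)) w →
      IsDivChoice q (fun e => max (w e) (c e)) w := by
  rcases hc with ⟨hsum, hceq⟩ | ⟨hlt, r, hr, hceq⟩
  · -- no cutting: `c = z ∨ z'`
    have hce : ∀ e, c e = max (z e) (z' e) := fun e => congrFun hceq e
    have hsumc : ∑ e, c e ≤ q := by
      calc ∑ e, c e = ∑ e, max (z e) (z' e) :=
            Finset.sum_congr rfl fun e _ => hce e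
        _ ≤ q := hsum
    refine ⟨Or.inl ⟨hsumc, rfl⟩, ?_, ?_, ?_⟩
    · left
      have hmax : ∀ e, max (c e) (z e) = c e :=
        fun e => max_eq_left ((hce e) ▸ le_max_left _ _)
      exact ⟨by
        calc ∑ e, max (c e) (z e) = ∑ e, c e :=
              Finset.sum_congr rfl fun e _ => hmax e
          _ ≤ q := hsumc,
        funext fun e => (hmax e).symm⟩
    · left
      have hmax : ∀ e, max (c e) (z' e) = c e :=
        fun e => max_eq_left ((hce e) ▸ le_max_right _ _)
      exact ⟨by
        calc ∑ e, max (c e) (z' e) = ∑ e, c e :=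
              Finset.sum_congr rfl fun e _ => hmax e
          _ ≤ q := hsumc,
        funext fun e => (hmax e).symm⟩
    · intro w _ hwz hwz'
      refine divChoice_key hwz hwz' ?_
      intro e he
      rw [hce e] at he
      exact he
  · -- cutting at height `r`
    have hce : ∀ e, c e = min r (max (z e) (z' e)) := fun e => congrFun hceq e
    have hq : ∑ e, c e = q := by
      rw [← hr]
      exact Finset.sum_congr rfl fun e _ => hce e
    refine ⟨Or.inl ⟨hq.le, rfl⟩, ?_, ?_, ?_⟩
    · exact divChoice_mid hce hr fun e => le_max_left _ _
    · exact divChoice_mid hce hr fun e => le_max_right _ _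
    · intro w _ hwz hwz'
      refine divChoice_key hwz hwz' ?_
      intro e he
      exact lt_of_lt_of_le he ((hce e) ▸ min_le_right _ _)
end

section
/- Double-cover correspondence: the map sending an assignment x of G to the assignment x̃ of 𝒢 defined by x̃(u₁v₂) = x({u,v}) = x̃(v₁u₂) establishes a bijection between the stable assignments of (G, b, q) and the symmetric stable assignments of (𝒢, b̃, q̃). -/
open scoped NNReal

attribute [local instance] Classical.propDecidable

/-- `IsDivChoiceOn S qv z w` asserts that, on the coordinates in the finite set `S`,
`w` agrees with the value of the diversifying choice function with quota `qv` applied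
to the restriction of `z` to `S`: if `∑_{e ∈ S} z e ≤ qv` then the choice is `z` itself,
and otherwise it is `e ↦ min r (z e)`, where `r ≥ 0` is the (unique) cutting height
satisfying `∑_{e ∈ S} min r (z e) = qv`. -/
def IsDivChoiceOn {E : Type*} (S : Finset E) (qv : ℝ≥0) (z w : E → ℝ≥0) : Prop :=
  ((∑ e ∈ S, z e) ≤ qv ∧ ∀ e ∈ S, w e = z e) ∨
    (qv < (∑ e ∈ S, z e) ∧
      ∃ r : ℝ≥0, (∑ e ∈ S, min r (z e)) = qv ∧ ∀ e ∈ S, w e = min r (z e))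

/-- The head `H(x_v)` of `x` at a vertex whose set of incident edges is `S` and whose
quota is `qv`: the set of edges of `S` where `x` attains its maximum over `S`, provided
`∑_{e ∈ S} x e = qv`, and `∅` otherwise. -/
def headOn {E : Type*} (S : Finset E) (qv : ℝ≥0) (x : E → ℝ≥0) : Set E :=
  {e | e ∈ S ∧ (∑ e' ∈ S, x e') = qv ∧ x e = S.sup x}

/-- An edge `e` is satiated for a vertex with incident edges `S` and quota `qv`
(w.r.t. capacities `b` and assignment `x`) if `e ∈ H(x_v) ∪ U(x_v)`,
i.e. `e` is in the head or its capacity is attained. -/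
def satiatedOn {E : Type*} (S : Finset E) (qv : ℝ≥0) (b x : E → ℝ≥0) (e : E) : Prop :=
  e ∈ headOn S qv x ∨ x e = b e

/-- The set of edges of the (finite, not necessarily bipartite) graph `G` incident to
the vertex `v`. -/
noncomputable def incEdges {V : Type*} [Fintype V] [DecidableEq V] (G : SimpleGraph V)
    [DecidableRel G.Adj] (v : V) : Finset G.edgeSet :=
  Finset.univ.filter fun e => v ∈ (e : Sym2 V)

/-- A stable assignment of the diversifying market on an arbitrary finite graph `G`
with edge capacities `b` and vertex quotas `q`: an assignment `x` on the edges of `G`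
is stable if it is admissible (`x ≤ b`), rational at every vertex (`C_v(x_v) = x_v`),
and has no blocking edge, i.e. every edge is satiated for at least one of its two
endpoints. -/
def StableGraph {V : Type*} [Fintype V] [DecidableEq V] (G : SimpleGraph V)
    [DecidableRel G.Adj] (b : G.edgeSet → ℝ≥0) (q : V → ℝ≥0)
    (x : G.edgeSet → ℝ≥0) : Prop :=
  (∀ e, x e ≤ b e) ∧
  (∀ v : V, IsDivChoiceOn (incEdges G v) (q v) x x) ∧
  ∀ e : G.edgeSet, ∃ v ∈ (e : Sym2 V), satiatedOn (incEdges G v) (q v) b x e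

/-- The set of edges incident to firm `i` (edges `e` with `firm e = i`). -/
noncomputable def firmEdges {E F : Type*} [Fintype E] (firm : E → F) (i : F) : Finset E :=
  Finset.univ.filter fun e => firm e = i

/-- The set of edges incident to worker `j` (edges `e` with `worker e = j`). -/
noncomputable def workerEdges {E W : Type*} [Fintype E] (worker : E → W) (j : W) : Finset E :=
  Finset.univ.filter fun e => worker e = j

/-- A stable assignment of a diversifying bipartite market: the finite bipartite
(multi)graph has parts `F` (firms) and `W` (workers) and edge set `E`, the edge `e`
joining firm `firm e` to worker `worker e`; `b` gives edge capacities and `qF`, `qW`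
the vertex quotas. An assignment `x : E → ℝ≥0` is stable if it is admissible (`x ≤ b`),
rational at every vertex (`C_v(x_v) = x_v`), and has no blocking edge, i.e. every edge
is satiated for at least one of its two endpoints. -/
def StableBip {E F W : Type*} [Fintype E] (firm : E → F) (worker : E → W)
    (b : E → ℝ≥0) (qF : F → ℝ≥0) (qW : W → ℝ≥0) (x : E → ℝ≥0) : Prop :=
  (∀ e, x e ≤ b e) ∧
  (∀ i : F, IsDivChoiceOn (firmEdges firm i) (qF i) x x) ∧
  (∀ j : W, IsDivChoiceOn (workerEdges worker j) (qW j) x x) ∧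
  ∀ e : E, satiatedOn (firmEdges firm (firm e)) (qF (firm e)) b x e ∨
    satiatedOn (workerEdges worker (worker e)) (qW (worker e)) b x e

section AuxTransfer

variable {E E' : Type*} [DecidableEq E'] [DecidableEq E]

lemma isDivChoiceOn_image (S : Finset E) (φ : E → E') (hinj : Set.InjOn φ S)
    (qv : ℝ≥0) (x : E' → ℝ≥0) :
    IsDivChoiceOn (S.image φ) qv x x ↔ IsDivChoiceOn S qv (fun d => x (φ d)) (fun d => x (φ d)) := by
  unfold IsDivChoiceOn
  rw [Finset.sum_image (fun a ha b hb h => hinj ha hb h)]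
  constructor
  · rintro (⟨h1, h2⟩ | ⟨h1, r, hr1, hr2⟩)
    · exact Or.inl ⟨h1, fun d hd => h2 _ (Finset.mem_image_of_mem φ hd)⟩
    · refine Or.inr ⟨h1, r, ?_, fun d hd => hr2 _ (Finset.mem_image_of_mem φ hd)⟩
      rw [← hr1, Finset.sum_image (fun a ha b hb h => hinj ha hb h)]
  · rintro (⟨h1, h2⟩ | ⟨h1, r, hr1, hr2⟩)
    · refine Or.inl ⟨h1, fun e he => ?_⟩
      obtain ⟨d, hd, rfl⟩ := Finset.mem_image.mp he
      exact h2 d hd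
    · refine Or.inr ⟨h1, r, ?_, fun e he => ?_⟩
      · rw [Finset.sum_image (fun a ha b hb h => hinj ha hb h)]; exact hr1
      · obtain ⟨d, hd, rfl⟩ := Finset.mem_image.mp he
        exact hr2 d hd

lemma headOn_image (S : Finset E) (φ : E → E') (hinj : Set.InjOn φ S)
    (qv : ℝ≥0) (x : E' → ℝ≥0) (d : E) (hd : d ∈ S) :
    φ d ∈ headOn (S.image φ) qv x ↔ d ∈ headOn S qv (fun d => x (φ d)) := by
  unfold headOn
  simp only [Set.mem_setOf_eq,
    Finset.sum_image (fun a (ha : a ∈ S) b (hb : b ∈ S) h => hinj ha hb h),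
    Finset.sup_image, Finset.mem_image_of_mem φ hd, hd, true_and]
  rfl

lemma satiatedOn_image (S : Finset E) (φ : E → E') (hinj : Set.InjOn φ S)
    (qv : ℝ≥0) (b x : E' → ℝ≥0) (d : E) (hd : d ∈ S) :
    satiatedOn (S.image φ) qv b x (φ d) ↔
      satiatedOn S qv (fun d => b (φ d)) (fun d => x (φ d)) d := by
  unfold satiatedOn
  rw [headOn_image S φ hinj qv x d hd]

end AuxTransfer

section Darts

variable {V : Type*} [Fintype V] [DecidableEq V] (G : SimpleGraph V) [DecidableRel G.Adj]

/-- The edge of a dart, as an element of `G.edgeSet`. -/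
noncomputable def edgeOfDart (d : G.Dart) : G.edgeSet := ⟨d.edge, d.edge_mem⟩

lemma fst_mem_edge (d : G.Dart) : d.fst ∈ d.edge := by
  rw [SimpleGraph.Dart.edge, Sym2.mem_iff]; left; rfl

lemma snd_mem_edge (d : G.Dart) : d.snd ∈ d.edge := by
  rw [SimpleGraph.Dart.edge, Sym2.mem_iff]; right; rfl

lemma mem_firmEdges_dart (u : V) (d : G.Dart) :
    d ∈ firmEdges (fun d : G.Dart => d.fst) u ↔ d.fst = u := by
  simp [firmEdges]

lemma mem_workerEdges_dart (u : V) (d : G.Dart) :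
    d ∈ workerEdges (fun d : G.Dart => d.snd) u ↔ d.snd = u := by
  simp [workerEdges]

lemma mem_incEdges (u : V) (e : G.edgeSet) :
    e ∈ incEdges G u ↔ u ∈ (e : Sym2 V) := by simp [incEdges]

lemma dart_eq_of_fst_edge (d₁ d₂ : G.Dart) (h1 : d₁.fst = d₂.fst)
    (h2 : d₁.edge = d₂.edge) : d₁ = d₂ := by
  rcases (SimpleGraph.dart_edge_eq_iff d₁ d₂).mp h2 with h | h
  · exact h
  · exfalso
    rw [h] at h1
    exact G.irrefl (h1 ▸ d₂.adj)

lemma dart_eq_of_snd_edge (d₁ d₂ : G.Dart) (h1 : d₁.snd = d₂.snd)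
    (h2 : d₁.edge = d₂.edge) : d₁ = d₂ := by
  have := dart_eq_of_fst_edge G d₁.symm d₂.symm (by simpa using h1) (by simpa using h2)
  simpa using congrArg SimpleGraph.Dart.symm this

lemma injOn_firm (u : V) :
    Set.InjOn (edgeOfDart G) (firmEdges (fun d : G.Dart => d.fst) u) := by
  intro d1 h1 d2 h2 h
  exact dart_eq_of_fst_edge G d1 d2
    (by rw [(mem_firmEdges_dart G u d1).mp h1, (mem_firmEdges_dart G u d2).mp h2])
    (congrArg Subtype.val h)

lemma injOn_worker (u : V) :
    Set.InjOn (edgeOfDart G) (workerEdges (fun d : G.Dart => d.snd) u) := by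
  intro d1 h1 d2 h2 h
  exact dart_eq_of_snd_edge G d1 d2
    (by rw [(mem_workerEdges_dart G u d1).mp h1, (mem_workerEdges_dart G u d2).mp h2])
    (congrArg Subtype.val h)

lemma image_firmEdges (u : V) :
    (firmEdges (fun d : G.Dart => d.fst) u).image (edgeOfDart G) = incEdges G u := by
  ext e
  simp only [Finset.mem_image, mem_firmEdges_dart, mem_incEdges]
  constructor
  · rintro ⟨d, hd, rfl⟩
    show u ∈ d.edge
    rw [← hd]; exact fst_mem_edge G d
  · intro hu
    have hadj : G.Adj u (Sym2.Mem.other hu) := by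
      rw [← SimpleGraph.mem_edgeSet, Sym2.other_spec hu]; exact e.2
    exact ⟨⟨(u, Sym2.Mem.other hu), hadj⟩, rfl, Subtype.ext (Sym2.other_spec hu)⟩

lemma image_workerEdges (u : V) :
    (workerEdges (fun d : G.Dart => d.snd) u).image (edgeOfDart G) = incEdges G u := by
  have hset : workerEdges (fun d : G.Dart => d.snd) u =
      (firmEdges (fun d : G.Dart => d.fst) u).image SimpleGraph.Dart.symm := by
    ext d
    simp only [mem_workerEdges_dart, Finset.mem_image, mem_firmEdges_dart]
    constructor
    · intro h; exact ⟨d.symm, by simp [h], by simp⟩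
    · rintro ⟨d', h, rfl⟩; simpa using h
  rw [hset, Finset.image_image]
  have : edgeOfDart G ∘ SimpleGraph.Dart.symm = edgeOfDart G :=
    funext fun d => Subtype.ext d.edge_symm
  rw [this, image_firmEdges]

lemma exists_dart (e : G.edgeSet) : ∃ d : G.Dart, edgeOfDart G d = e := by
  obtain ⟨e, he⟩ := e
  revert he
  refine Sym2.ind (fun u v he => ?_) e
  exact ⟨⟨(u, v), (SimpleGraph.mem_edgeSet G).mp he⟩, rfl⟩

lemma stable_iff (b : G.edgeSet → ℝ≥0) (q : V → ℝ≥0)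
    (x : G.edgeSet → ℝ≥0) (y : G.Dart → ℝ≥0)
    (hxy : ∀ d : G.Dart, y d = x (edgeOfDart G d)) :
    StableGraph G b q x ↔
      StableBip (fun d : G.Dart => d.fst) (fun d : G.Dart => d.snd)
        (fun d : G.Dart => b ⟨d.edge, d.edge_mem⟩) q q y := by
  have hy : y = fun d => x (edgeOfDart G d) := funext hxy
  subst hy
  constructor
  · rintro ⟨hadm, hrat, hblk⟩
    refine ⟨fun d => hadm _, fun i => ?_, fun j => ?_, fun d => ?_⟩
    · have := hrat i
      rw [← image_firmEdges G i, isDivChoiceOn_image _ _ (injOn_firm G i)] at this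
      exact this
    · have := hrat j
      rw [← image_workerEdges G j, isDivChoiceOn_image _ _ (injOn_worker G j)] at this
      exact this
    · obtain ⟨v, hv, hsat⟩ := hblk (edgeOfDart G d)
      have hv' : v ∈ d.edge := hv
      rw [SimpleGraph.Dart.edge, Sym2.mem_iff] at hv'
      rcases hv' with hv' | hv'
      · left
        have hd : d ∈ firmEdges (fun d : G.Dart => d.fst) v :=
          (mem_firmEdges_dart G v d).mpr hv'.symm
        subst hv'
        refine (satiatedOn_image _ _ (injOn_firm G _) _ b x d hd).mp ?_
        rw [image_firmEdges]
        exact hsat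
      · right
        have hd : d ∈ workerEdges (fun d : G.Dart => d.snd) v :=
          (mem_workerEdges_dart G v d).mpr hv'.symm
        subst hv'
        refine (satiatedOn_image _ _ (injOn_worker G _) _ b x d hd).mp ?_
        rw [image_workerEdges]
        exact hsat
  · rintro ⟨hadm, hratF, hratW, hblk⟩
    refine ⟨fun e => ?_, fun v => ?_, fun e => ?_⟩
    · obtain ⟨d, rfl⟩ := exists_dart G e
      exact hadm d
    · rw [← image_firmEdges G v, isDivChoiceOn_image _ _ (injOn_firm G v)]
      exact hratF v
    · obtain ⟨d, rfl⟩ := exists_dart G e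
      rcases hblk d with hsat | hsat
      · refine ⟨d.fst, fst_mem_edge G d, ?_⟩
        have hd : d ∈ firmEdges (fun d : G.Dart => d.fst) d.fst :=
          (mem_firmEdges_dart G _ d).mpr rfl
        rw [← image_firmEdges G d.fst,
          satiatedOn_image _ _ (injOn_firm G d.fst) _ _ _ d hd]
        exact hsat
      · refine ⟨d.snd, snd_mem_edge G d, ?_⟩
        have hd : d ∈ workerEdges (fun d : G.Dart => d.snd) d.snd :=
          (mem_workerEdges_dart G _ d).mpr rfl
        rw [← image_workerEdges G d.snd,
          satiatedOn_image _ _ (injOn_worker G d.snd) _ _ _ d hd]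
        exact hsat

end Darts

/-- Double-cover correspondence. The bipartite double cover `𝒢` of a
finite graph `G` has two copies `V₁, V₂` of the vertex set of `G` as its parts, and for
each edge `{u,v}` of `G` the two edges `u₁v₂` and `v₁u₂`; these edges correspond exactly
to the darts (oriented edges) of `G`, the dart `d = (u,v)` giving the edge `u₁v₂` with
firm-side endpoint `u`, worker-side endpoint `v`, capacity `b̃(u₁v₂) = b({u,v})`, the
involution `σ` being dart reversal, and quotas `q̃(v₁) = q̃(v₂) = q(v)`. The map
`x ↦ x̃`, `x̃(u₁v₂) = x({u,v}) = x̃(v₁u₂)`, is a bijection between the stable assignments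
of `(G, b, q)` and the symmetric stable assignments of `(𝒢, b̃, q̃)`. -/
theorem doubleCover_stable_bijOn {V : Type*} [Fintype V] [DecidableEq V]
    (G : SimpleGraph V) [DecidableRel G.Adj] (b : G.edgeSet → ℝ≥0) (q : V → ℝ≥0) :
    Set.BijOn (fun (x : G.edgeSet → ℝ≥0) => fun d : G.Dart => x ⟨d.edge, d.edge_mem⟩)
      {x | StableGraph G b q x}
      {y | StableBip (fun d : G.Dart => d.fst) (fun d : G.Dart => d.snd)
            (fun d : G.Dart => b ⟨d.edge, d.edge_mem⟩) q q y ∧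
           ∀ d : G.Dart, y d.symm = y d} := by
  refine ⟨?_, ?_, ?_⟩
  · -- MapsTo
    intro x hx
    refine ⟨(stable_iff G b q x _ (fun d => rfl)).mp hx, fun d => ?_⟩
    show x ⟨d.symm.edge, _⟩ = x ⟨d.edge, _⟩
    congr 1
    exact Subtype.ext d.edge_symm
  · -- InjOn
    intro x1 _ x2 _ h
    funext e
    obtain ⟨d, rfl⟩ := exists_dart G e
    exact congrFun h d
  · -- SurjOn
    rintro y ⟨hy, hsym⟩
    set x : G.edgeSet → ℝ≥0 := fun e => y (Classical.choose (exists_dart G e)) with hx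
    have hxy : ∀ d : G.Dart, y d = x (edgeOfDart G d) := by
      intro d
      have hspec := Classical.choose_spec (exists_dart G (edgeOfDart G d))
      have hedge : (Classical.choose (exists_dart G (edgeOfDart G d))).edge = d.edge :=
        congrArg Subtype.val hspec
      rcases (SimpleGraph.dart_edge_eq_iff _ d).mp hedge with h | h
      · rw [hx]; simp only; rw [h]
      · rw [hx]; simp only; rw [h]; exact (hsym d).symm
    refine ⟨x, (stable_iff G b q x y hxy).mpr hy, ?_⟩
    funext d
    exact (hxy d).symm
end
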